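/- Let (Cᵢ,d), i = 1,2,3, be ℤ-graded cochain complexes of modules over a commutative ring, f₁, f₂ integers, and φ₁ : C₁^k → C₂^{k+1−f₁}, φ₂ : C₂^k → C₃^{k+1−f₂} maps satisfying d∘φᵢ = φᵢ∘d, φ₂∘φ₁ = 0, with each Cᵢ carrying a graded product ∧ᵢ satisfying the Leibniz rule for d, and with φ₁, φ₂ multiplicative. Then for every α = (α₁,α₂,α₃) ∈ C^k = C₁^k ⊕ C₂^{k−f₁} ⊕ C₃^{k−f₁−f₂} and every γ ∈ C₁^m the following Leibniz-type identity holds for the differential D(u,v,w) = (du, φ₁u − dv, φ₂v + dw): D(α ∧ γ) = (Dα) ∧ γ + (−1)^k ( α₁ ∧₁ dγ, −(−1)^{f₁} α₂ ∧₂ φ₁(dγ), (−1)^{f₁+f₂} α₃ ∧₃ φ₂φ₁(dγ) ), where α ∧ γ = (α₁ ∧₁ γ, α₂ ∧₂ φ₁γ, α₃ ∧₃ φ₂φ₁γ). In particular, if f₁ and f₂ are both odd, then D(α ∧ γ) = (Dα) ∧ γ + (−1)^k α ∧ dγ. -/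

import Mathlib

/-- The triple rolled-up differential
`D (u, v, w) = (d₁ u, φ₁ u - d₂ v, φ₂ v + d₃ w)`. -/
def rollD3 {R M₁ M₂ M₃ : Type*} [CommRing R]
    [AddCommGroup M₁] [Module R M₁] [AddCommGroup M₂] [Module R M₂]
    [AddCommGroup M₃] [Module R M₃]
    (d₁ : M₁ →ₗ[R] M₁) (d₂ : M₂ →ₗ[R] M₂) (d₃ : M₃ →ₗ[R] M₃)
    (φ₁ : M₁ →ₗ[R] M₂) (φ₂ : M₂ →ₗ[R] M₃) :
    (M₁ × M₂ × M₃) →ₗ[R] M₁ × M₂ × M₃ :=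
  LinearMap.prod (d₁ ∘ₗ LinearMap.fst R M₁ (M₂ × M₃))
    (LinearMap.prod
      ((φ₁ ∘ₗ LinearMap.fst R M₁ (M₂ × M₃)) -
        (d₂ ∘ₗ LinearMap.fst R M₂ M₃ ∘ₗ LinearMap.snd R M₁ (M₂ × M₃)))
      ((φ₂ ∘ₗ LinearMap.fst R M₂ M₃ ∘ₗ LinearMap.snd R M₁ (M₂ × M₃)) +
        (d₃ ∘ₗ LinearMap.snd R M₂ M₃ ∘ₗ LinearMap.snd R M₁ (M₂ × M₃))))

/-- Under the hypotheses of the triple rolled-up complex with graded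
products `∧ᵢ` satisfying the Leibniz rule and multiplicative chain maps `φ₁`, `φ₂`,
for `α = (α₁, α₂, α₃) ∈ C^k` and `γ ∈ C₁^m` one has the Leibniz-type identity
`D (α ∧ γ) = (D α) ∧ γ + (-1)^k (α₁ ∧₁ dγ, -(-1)^{f₁} α₂ ∧₂ φ₁ (dγ),
(-1)^{f₁+f₂} α₃ ∧₃ φ₂ φ₁ (dγ))`, where
`α ∧ γ = (α₁ ∧₁ γ, α₂ ∧₂ φ₁ γ, α₃ ∧₃ φ₂ φ₁ γ)`.  In particular, if `f₁` and `f₂`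
are both odd, then `D (α ∧ γ) = (D α) ∧ γ + (-1)^k α ∧ dγ`. -/
theorem stmt_5 {R M₁ M₂ M₃ : Type*} [CommRing R]
    [AddCommGroup M₁] [Module R M₁] [AddCommGroup M₂] [Module R M₂]
    [AddCommGroup M₃] [Module R M₃]
    (C₁ : ℤ → Submodule R M₁) (C₂ : ℤ → Submodule R M₂) (C₃ : ℤ → Submodule R M₃)
    (d₁ : M₁ →ₗ[R] M₁) (d₂ : M₂ →ₗ[R] M₂) (d₃ : M₃ →ₗ[R] M₃)
    (hd₁ : ∀ k : ℤ, ∀ x ∈ C₁ k, d₁ x ∈ C₁ (k + 1))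
    (hd₂ : ∀ k : ℤ, ∀ x ∈ C₂ k, d₂ x ∈ C₂ (k + 1))
    (hd₃ : ∀ k : ℤ, ∀ x ∈ C₃ k, d₃ x ∈ C₃ (k + 1))
    (hdd₁ : ∀ x, d₁ (d₁ x) = 0) (hdd₂ : ∀ x, d₂ (d₂ x) = 0)
    (hdd₃ : ∀ x, d₃ (d₃ x) = 0)
    (f₁ f₂ : ℤ) (φ₁ : M₁ →ₗ[R] M₂) (φ₂ : M₂ →ₗ[R] M₃)
    (hφ₁ : ∀ k : ℤ, ∀ x ∈ C₁ k, φ₁ x ∈ C₂ (k + 1 - f₁))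
    (hφ₂ : ∀ k : ℤ, ∀ x ∈ C₂ k, φ₂ x ∈ C₃ (k + 1 - f₂))
    (hφ₁d : ∀ x, d₂ (φ₁ x) = φ₁ (d₁ x))
    (hφ₂d : ∀ x, d₃ (φ₂ x) = φ₂ (d₂ x))
    (hφφ : ∀ x, φ₂ (φ₁ x) = 0)
    (mul₁ : M₁ →ₗ[R] M₁ →ₗ[R] M₁) (mul₂ : M₂ →ₗ[R] M₂ →ₗ[R] M₂)
    (mul₃ : M₃ →ₗ[R] M₃ →ₗ[R] M₃)
    (hmem₁ : ∀ j m : ℤ, ∀ x ∈ C₁ j, ∀ y ∈ C₁ m, mul₁ x y ∈ C₁ (j + m))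
    (hmem₂ : ∀ j m : ℤ, ∀ x ∈ C₂ j, ∀ y ∈ C₂ m, mul₂ x y ∈ C₂ (j + m))
    (hmem₃ : ∀ j m : ℤ, ∀ x ∈ C₃ j, ∀ y ∈ C₃ m, mul₃ x y ∈ C₃ (j + m))
    (hLeib₁ : ∀ j : ℤ, ∀ x ∈ C₁ j, ∀ y : M₁,
      d₁ (mul₁ x y) = mul₁ (d₁ x) y + ((j.negOnePow : ℤ) • mul₁ x (d₁ y)))
    (hLeib₂ : ∀ j : ℤ, ∀ x ∈ C₂ j, ∀ y : M₂,
      d₂ (mul₂ x y) = mul₂ (d₂ x) y + ((j.negOnePow : ℤ) • mul₂ x (d₂ y)))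
    (hLeib₃ : ∀ j : ℤ, ∀ x ∈ C₃ j, ∀ y : M₃,
      d₃ (mul₃ x y) = mul₃ (d₃ x) y + ((j.negOnePow : ℤ) • mul₃ x (d₃ y)))
    (hmul₁ : ∀ x y : M₁, φ₁ (mul₁ x y) = mul₂ (φ₁ x) (φ₁ y))
    (hmul₂ : ∀ x y : M₂, φ₂ (mul₂ x y) = mul₃ (φ₂ x) (φ₂ y)) :
    -- the Leibniz-type identity for `D`
    (∀ k m : ℤ, ∀ α₁ ∈ C₁ k, ∀ α₂ ∈ C₂ (k - f₁), ∀ α₃ ∈ C₃ (k - f₁ - f₂),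
      ∀ γ ∈ C₁ m,
        rollD3 d₁ d₂ d₃ φ₁ φ₂
            (mul₁ α₁ γ, mul₂ α₂ (φ₁ γ), mul₃ α₃ (φ₂ (φ₁ γ)))
          = (mul₁ (rollD3 d₁ d₂ d₃ φ₁ φ₂ (α₁, α₂, α₃)).1 γ,
             mul₂ (rollD3 d₁ d₂ d₃ φ₁ φ₂ (α₁, α₂, α₃)).2.1 (φ₁ γ),
             mul₃ (rollD3 d₁ d₂ d₃ φ₁ φ₂ (α₁, α₂, α₃)).2.2 (φ₂ (φ₁ γ)))
            + (k.negOnePow : ℤ) •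
              (((mul₁ α₁ (d₁ γ),
                 -((f₁.negOnePow : ℤ) • mul₂ α₂ (φ₁ (d₁ γ))),
                 ((f₁ + f₂).negOnePow : ℤ) • mul₃ α₃ (φ₂ (φ₁ (d₁ γ)))))
                : M₁ × M₂ × M₃))
    -- in particular, when `f₁` and `f₂` are both odd, `D` satisfies the Leibniz rule
    ∧ (Odd f₁ → Odd f₂ →
        ∀ k m : ℤ, ∀ α₁ ∈ C₁ k, ∀ α₂ ∈ C₂ (k - f₁), ∀ α₃ ∈ C₃ (k - f₁ - f₂),
        ∀ γ ∈ C₁ m,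
          rollD3 d₁ d₂ d₃ φ₁ φ₂
              (mul₁ α₁ γ, mul₂ α₂ (φ₁ γ), mul₃ α₃ (φ₂ (φ₁ γ)))
            = (mul₁ (rollD3 d₁ d₂ d₃ φ₁ φ₂ (α₁, α₂, α₃)).1 γ,
               mul₂ (rollD3 d₁ d₂ d₃ φ₁ φ₂ (α₁, α₂, α₃)).2.1 (φ₁ γ),
               mul₃ (rollD3 d₁ d₂ d₃ φ₁ φ₂ (α₁, α₂, α₃)).2.2 (φ₂ (φ₁ γ)))
              + (k.negOnePow : ℤ) •
                (((mul₁ α₁ (d₁ γ),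
                   mul₂ α₂ (φ₁ (d₁ γ)),
                   mul₃ α₃ (φ₂ (φ₁ (d₁ γ))))) : M₁ × M₂ × M₃)) := by
  have main : ∀ k m : ℤ, ∀ α₁ ∈ C₁ k, ∀ α₂ ∈ C₂ (k - f₁), ∀ α₃ ∈ C₃ (k - f₁ - f₂),
      ∀ γ ∈ C₁ m,
        rollD3 d₁ d₂ d₃ φ₁ φ₂
            (mul₁ α₁ γ, mul₂ α₂ (φ₁ γ), mul₃ α₃ (φ₂ (φ₁ γ)))
          = (mul₁ (rollD3 d₁ d₂ d₃ φ₁ φ₂ (α₁, α₂, α₃)).1 γ,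
             mul₂ (rollD3 d₁ d₂ d₃ φ₁ φ₂ (α₁, α₂, α₃)).2.1 (φ₁ γ),
             mul₃ (rollD3 d₁ d₂ d₃ φ₁ φ₂ (α₁, α₂, α₃)).2.2 (φ₂ (φ₁ γ)))
            + (k.negOnePow : ℤ) •
              (((mul₁ α₁ (d₁ γ),
                 -((f₁.negOnePow : ℤ) • mul₂ α₂ (φ₁ (d₁ γ))),
                 ((f₁ + f₂).negOnePow : ℤ) • mul₃ α₃ (φ₂ (φ₁ (d₁ γ)))))
                : M₁ × M₂ × M₃) := by
    intro k m α₁ hα₁ α₂ hα₂ α₃ hα₃ γ hγ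
    simp only [rollD3, LinearMap.prod_apply, LinearMap.coe_comp, Function.comp_apply,
      LinearMap.fst_apply, LinearMap.snd_apply, Function.prod, LinearMap.sub_apply,
      LinearMap.add_apply, Prod.mk_add_mk, Prod.smul_mk]
    refine Prod.ext ?_ (Prod.ext ?_ ?_)
    · exact hLeib₁ k α₁ hα₁ γ
    · show φ₁ (mul₁ α₁ γ) - d₂ (mul₂ α₂ (φ₁ γ)) = _
      rw [hmul₁, hLeib₂ (k - f₁) α₂ hα₂ (φ₁ γ), hφ₁d,
        Int.negOnePow_sub, map_sub, LinearMap.sub_apply, smul_neg, smul_smul,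
        Units.val_mul]
      abel
    · show φ₂ (mul₂ α₂ (φ₁ γ)) + d₃ (mul₃ α₃ (φ₂ (φ₁ γ))) = _
      rw [hmul₂, hLeib₃ (k - f₁ - f₂) α₃ hα₃ (φ₂ (φ₁ γ)), hφ₂d, hφ₁d,
        sub_sub, Int.negOnePow_sub, map_add, LinearMap.add_apply, smul_smul,
        Units.val_mul]
      abel
  refine ⟨main, fun hf₁ hf₂ k m α₁ hα₁ α₂ hα₂ α₃ hα₃ γ hγ => ?_⟩
  rw [main k m α₁ hα₁ α₂ hα₂ α₃ hα₃ γ hγ]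
  congr 1
  have h1 : f₁.negOnePow = -1 := Int.negOnePow_odd _ hf₁
  have h2 : (f₁ + f₂).negOnePow = 1 := by
    rw [Int.negOnePow_add, h1, Int.negOnePow_odd _ hf₂]; rfl
  rw [h1, h2]
  push_cast
  simp
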